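/- Under the stated hypotheses, the lower-right (d−p)×(d−p) block of the matrix product G·A equals the identity: (GA)_{22} = I_{d−p}. -/

import Mathlib

open MeasureTheory Matrix Real Filter Set Topology

private lemma sq_complete (α β : ℝ) (hα : 0 < α) (t : ℝ) :
    Real.exp (-(α*t^2+β*t)) = Real.exp (β^2/(4*α)) * Real.exp (-α*(t+β/(2*α))^2) := by
  rw [← Real.exp_add]; congr 1; field_simp; ring

private lemma int_g (α β : ℝ) (hα : 0 < α) :
    Integrable (fun t : ℝ => Real.exp (-(α*t^2+β*t))) := by
  have h := (integrable_exp_neg_mul_sq hα).comp_add_right (β/(2*α))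
  have heq : (fun t : ℝ => Real.exp (-(α*t^2+β*t)))
      = fun t => Real.exp (β^2/(4*α)) * Real.exp (-α*(t+β/(2*α))^2) := by
    funext t; exact sq_complete α β hα t
  rw [heq]
  exact (h.const_mul _)

private lemma int_tg (α β : ℝ) (hα : 0 < α) :
    Integrable (fun t : ℝ => t * Real.exp (-(α*t^2+β*t))) := by
  set m := β/(2*α)
  have h1 := (integrable_mul_exp_neg_mul_sq hα).comp_add_right m
  have h2 := (integrable_exp_neg_mul_sq hα).comp_add_right m
  have heq : (fun t : ℝ => t * Real.exp (-(α*t^2+β*t)))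
      = fun t => Real.exp (β^2/(4*α)) * ((t+m) * Real.exp (-α*(t+m)^2))
          - (Real.exp (β^2/(4*α)) * m) * Real.exp (-α*(t+m)^2) := by
    funext t; rw [sq_complete α β hα t]; ring
  rw [heq]
  exact (h1.const_mul _).sub (h2.const_mul _)

private lemma int_t2g (α β : ℝ) (hα : 0 < α) :
    Integrable (fun t : ℝ => t^2 * Real.exp (-(α*t^2+β*t))) := by
  set m := β/(2*α)
  have h0 : Integrable (fun x : ℝ => x^2 * Real.exp (-α*x^2)) := by
    have := integrable_rpow_mul_exp_neg_mul_sq hα (s := 2) (by norm_num)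
    refine this.congr ?_
    filter_upwards with x
    rw [show ((2:ℝ) = ((2:ℕ):ℝ)) by norm_num, Real.rpow_natCast]
  have h1 := h0.comp_add_right m
  have h2 := (integrable_mul_exp_neg_mul_sq hα).comp_add_right m
  have h3 := (integrable_exp_neg_mul_sq hα).comp_add_right m
  have heq : (fun t : ℝ => t^2 * Real.exp (-(α*t^2+β*t)))
      = fun t => Real.exp (β^2/(4*α)) * ((t+m)^2 * Real.exp (-α*(t+m)^2))
          - (Real.exp (β^2/(4*α)) * (2*m)) * ((t+m) * Real.exp (-α*(t+m)^2))
          + (Real.exp (β^2/(4*α)) * m^2) * Real.exp (-α*(t+m)^2) := by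
    funext t; rw [sq_complete α β hα t]; ring
  rw [heq]
  exact ((h1.const_mul _).sub (h2.const_mul _)).add (h3.const_mul _)


private lemma gauss_tendsto_cocompact (α : ℝ) (hα : 0 < α) (s : ℝ) :
    Tendsto (fun x : ℝ => |x| ^ s * Real.exp (-α * x^2)) (cocompact ℝ) (𝓝 0) :=
  tendsto_rpow_abs_mul_exp_neg_mul_sq_cocompact hα s

private lemma tendsto_add_cocompact (m : ℝ) (l : Filter ℝ) (hl : l = atTop ∨ l = atBot) :
    Tendsto (fun t : ℝ => t + m) l (cocompact ℝ) := by
  have hsub : (atBot ⊔ atTop : Filter ℝ) ≤ cocompact ℝ := by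
    rw [cocompact_eq_atBot_atTop]
  rcases hl with rfl | rfl
  · exact (tendsto_atTop_add_const_right atTop m tendsto_id).mono_right
      (le_trans le_sup_right hsub)
  · exact (tendsto_atBot_add_const_right atBot m tendsto_id).mono_right
      (le_trans le_sup_left hsub)

private lemma tend_g (α β : ℝ) (hα : 0 < α) (l : Filter ℝ) (hl : l = atTop ∨ l = atBot) :
    Tendsto (fun t : ℝ => Real.exp (-(α*t^2+β*t))) l (𝓝 0) := by
  set m := β/(2*α)
  have h0 : Tendsto (fun x : ℝ => Real.exp (-α * x^2)) (cocompact ℝ) (𝓝 0) := by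
    have := gauss_tendsto_cocompact α hα 0
    simpa using this
  have h1 : Tendsto (fun t : ℝ => Real.exp (-α * (t+m)^2)) l (𝓝 0) :=
    h0.comp (tendsto_add_cocompact m l hl)
  have heq : (fun t : ℝ => Real.exp (-(α*t^2+β*t)))
      = fun t => Real.exp (β^2/(4*α)) * Real.exp (-α*(t+m)^2) := by
    funext t; exact sq_complete α β hα t
  rw [heq]
  simpa using h1.const_mul (Real.exp (β^2/(4*α)))

private lemma tend_tg (α β : ℝ) (hα : 0 < α) (l : Filter ℝ) (hl : l = atTop ∨ l = atBot) :
    Tendsto (fun t : ℝ => t * Real.exp (-(α*t^2+β*t))) l (𝓝 0) := by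
  set m := β/(2*α)
  have hco := tendsto_add_cocompact m l hl
  have h0 : Tendsto (fun t : ℝ => |t+m| * Real.exp (-α * (t+m)^2)) l (𝓝 0) := by
    have := (gauss_tendsto_cocompact α hα 1).comp hco
    simpa [Function.comp_def] using this
  have h1 : Tendsto (fun t : ℝ => Real.exp (-α * (t+m)^2)) l (𝓝 0) := by
    have := (gauss_tendsto_cocompact α hα 0).comp hco
    refine this.congr fun t => ?_
    simp [Function.comp]
  have hbound : Tendsto (fun t : ℝ =>
      Real.exp (β^2/(4*α)) * (|t+m| * Real.exp (-α*(t+m)^2))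
        + (Real.exp (β^2/(4*α)) * |m|) * Real.exp (-α*(t+m)^2)) l (𝓝 0) := by
    have := (h0.const_mul (Real.exp (β^2/(4*α)))).add
      (h1.const_mul (Real.exp (β^2/(4*α)) * |m|))
    simpa using this
  apply squeeze_zero_norm _ hbound
  intro t
  rw [Real.norm_eq_abs, sq_complete α β hα t, abs_mul, abs_mul,
    Real.abs_exp, Real.abs_exp]
  have habs : |t| ≤ |t+m| + |m| := by
    calc |t| = |(t+m) + (-m)| := by ring_nf
    _ ≤ |t+m| + |-m| := abs_add_le _ _
    _ = |t+m| + |m| := by rw [abs_neg]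
  nlinarith [Real.exp_pos (β^2/(4*α)), Real.exp_pos (-α*(t+m)^2), abs_nonneg (t+m),
    abs_nonneg m, abs_nonneg t,
    mul_le_mul_of_nonneg_right habs (Real.exp_pos (-α*(t+m)^2)).le]

private lemma sq_complete' (α β : ℝ) (hα : 0 < α) (t : ℝ) :
    Real.exp (-(α*t^2+β*t)) = Real.exp (β^2/(4*α)) * Real.exp (-α*(t+β/(2*α))^2) := by
  rw [← Real.exp_add]; congr 1; field_simp; ring


private lemma integral_hasDerivAt_eq_zero {f f' : ℝ → ℝ}
    (hd : ∀ t, HasDerivAt f (f' t) t) (hi : Integrable f')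
    (htop : Tendsto f atTop (𝓝 0)) (hbot : Tendsto f atBot (𝓝 0)) :
    ∫ t : ℝ, f' t = 0 := by
  have h1 := integral_Iic_of_hasDerivAt_of_tendsto' (a := 0) (fun x _ => hd x)
    hi.integrableOn hbot
  have h2 := integral_Ioi_of_hasDerivAt_of_tendsto' (a := 0) (fun x _ => hd x)
    hi.integrableOn htop
  rw [← intervalIntegral.integral_Iic_add_Ioi (b := (0:ℝ)) hi.integrableOn hi.integrableOn, h1, h2]
  ring

private lemma hasDerivAt_g (α β t : ℝ) :
    HasDerivAt (fun s : ℝ => Real.exp (-(α*s^2+β*s)))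
      (-(2*α*t+β) * Real.exp (-(α*t^2+β*t))) t := by
  have h1 : HasDerivAt (fun s : ℝ => -(α*s^2+β*s)) (-(2*α*t+β)) t := by
    have hp : HasDerivAt (fun s : ℝ => s^2) (2*t) t := by
      simpa using hasDerivAt_pow 2 t
    have := ((hp.const_mul α).add ((hasDerivAt_id t).const_mul β)).neg
    exact this.congr_deriv (by ring)
  have := h1.exp
  exact this.congr_deriv (by ring)

private lemma int_lin_g (α β : ℝ) (hα : 0 < α) :
    Integrable (fun t : ℝ => (2*α*t+β) * Real.exp (-(α*t^2+β*t))) := by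
  have heq : (fun t : ℝ => (2*α*t+β) * Real.exp (-(α*t^2+β*t)))
      = fun t => (2*α) * (t * Real.exp (-(α*t^2+β*t))) + β * Real.exp (-(α*t^2+β*t)) := by
    funext t; ring
  rw [heq]
  exact ((int_tg α β hα).const_mul _).add ((int_g α β hα).const_mul _)

private lemma int_tlin_g (α β : ℝ) (hα : 0 < α) :
    Integrable (fun t : ℝ => t * ((2*α*t+β) * Real.exp (-(α*t^2+β*t)))) := by
  have heq : (fun t : ℝ => t * ((2*α*t+β) * Real.exp (-(α*t^2+β*t))))
      = fun t => (2*α) * (t^2 * Real.exp (-(α*t^2+β*t))) + β * (t * Real.exp (-(α*t^2+β*t))) := by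
    funext t; ring
  rw [heq]
  exact ((int_t2g α β hα).const_mul _).add ((int_tg α β hα).const_mul _)

private lemma integral_lin_g (α β : ℝ) (hα : 0 < α) :
    ∫ t : ℝ, (2*α*t+β) * Real.exp (-(α*t^2+β*t)) = 0 := by
  apply integral_hasDerivAt_eq_zero
    (f := fun t => -Real.exp (-(α*t^2+β*t)))
  · intro t
    exact (hasDerivAt_g α β t).neg.congr_deriv (by ring)
  · exact int_lin_g α β hα
  · simpa using (tend_g α β hα atTop (Or.inl rfl)).neg
  · simpa using (tend_g α β hα atBot (Or.inr rfl)).neg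

private lemma integral_tlin_g (α β : ℝ) (hα : 0 < α) :
    ∫ t : ℝ, t * ((2*α*t+β) * Real.exp (-(α*t^2+β*t)))
      = ∫ t : ℝ, Real.exp (-(α*t^2+β*t)) := by
  have h0 : ∫ t : ℝ, (t * ((2*α*t+β) * Real.exp (-(α*t^2+β*t)))
      - Real.exp (-(α*t^2+β*t))) = 0 := by
    apply integral_hasDerivAt_eq_zero
      (f := fun t => -(t * Real.exp (-(α*t^2+β*t))))
    · intro t
      exact ((hasDerivAt_id t).mul (hasDerivAt_g α β t)).neg.congr_deriv (by simp only [id_eq]; ring)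
    · exact (int_tlin_g α β hα).sub (int_g α β hα)
    · simpa using (tend_tg α β hα atTop (Or.inl rfl)).neg
    · simpa using (tend_tg α β hα atBot (Or.inr rfl)).neg
  rw [integral_sub (int_tlin_g α β hα) (int_g α β hα)] at h0
  linarith

/-- **The lower-right block of `G·A` is the identity.**
For the Gibbs second-moment matrix `G` of the classical impurity model, the
lower-right `(d−p) × (d−p)` block of the product `G·A` equals the identity. -/
theorem GA_lower_right_block_identity
    (d p : ℕ) (hd : 0 < d) (hp : p ≤ d)
    (A : Matrix (Fin d) (Fin d) ℝ) (hA : A.IsSymm)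
    (hA22 : ∀ v : Fin d → ℝ, (∀ i : Fin d, (i : ℕ) < p → v i = 0) → v ≠ 0 →
      0 < v ⬝ᵥ A.mulVec v)
    (U : (Fin d → ℝ) → ℝ) (hUmeas : Measurable U)
    (hU : ∀ x y : Fin d → ℝ, (∀ i : Fin d, (i : ℕ) < p → x i = y i) → U x = U y)
    (hZint : Integrable (fun x : Fin d → ℝ =>
      Real.exp (-(1/2) * (x ⬝ᵥ A.mulVec x) - U x)))
    (hmom : ∀ i j : Fin d, Integrable (fun x : Fin d → ℝ =>
      x i * x j * Real.exp (-(1/2) * (x ⬝ᵥ A.mulVec x) - U x)))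
    (Z : ℝ)
    (hZdef : Z = ∫ x : Fin d → ℝ, Real.exp (-(1/2) * (x ⬝ᵥ A.mulVec x) - U x))
    (G : Matrix (Fin d) (Fin d) ℝ)
    (hGdef : ∀ i j : Fin d, G i j = (1 / Z) * ∫ x : Fin d → ℝ,
      x i * x j * Real.exp (-(1/2) * (x ⬝ᵥ A.mulVec x) - U x)) :
    ∀ i j : Fin d, p ≤ (i : ℕ) → p ≤ (j : ℕ) → (G * A) i j = (if i = j then 1 else 0) := by
  obtain ⟨n, rfl⟩ : ∃ n, d = n + 1 := ⟨d - 1, (Nat.succ_pred_eq_of_pos hd).symm⟩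
  intro i j hi hj
  -- notation
  set ρ : (Fin (n+1) → ℝ) → ℝ :=
    fun x => Real.exp (-(1/2) * (x ⬝ᵥ A.mulVec x) - U x) with hρdef
  have hρx : ∀ x, ρ x = Real.exp (-(1/2) * (x ⬝ᵥ A.mulVec x) - U x) := fun _ => rfl
  -- Z is positive
  have hZpos : 0 < Z := by
    rw [hZdef]
    rw [integral_pos_iff_support_of_nonneg (fun x => (Real.exp_pos _).le) hZint]
    have hs : (Function.support ρ) = Set.univ :=
      Set.eq_univ_of_forall fun x => (Real.exp_pos _).ne'
    rw [hs]
    have h1 : volume (Set.univ.pi fun _ : Fin (n+1) => Set.Icc (0:ℝ) 1) = 1 := by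
      rw [volume_pi_pi]
      simp [Real.volume_Icc]
    calc (0:ENNReal) < 1 := by norm_num
    _ = volume (Set.univ.pi fun _ : Fin (n+1) => Set.Icc (0:ℝ) 1) := h1.symm
    _ ≤ volume Set.univ := measure_mono (Set.subset_univ _)
  have hZne : Z ≠ 0 := ne_of_gt hZpos
  -- A j j is positive
  have hAjj : 0 < A j j := by
    have h := hA22 (Pi.single j 1)
      (fun i' hi' => Pi.single_eq_of_ne (Fin.ne_of_val_ne (by omega)) 1)
      (by
        intro h
        have := congrFun h j
        simp at this)
    simpa [single_dotProduct, Matrix.mulVec_single] using h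
  have hα : 0 < A j j / 2 := by linarith
  -- the transfer lemma (Fubini at coordinate j)
  have transfer : ∀ Φ : (Fin (n+1) → ℝ) → ℝ, Integrable Φ →
      ∫ x, Φ x = ∫ y : Fin n → ℝ, ∫ t : ℝ, Φ (j.insertNth t y) := by
    intro Φ hΦ
    have hmp := volume_preserving_piFinSuccAbove (fun _ : Fin (n+1) => ℝ) j
    have hmps := MeasurePreserving.symm _ hmp
    have hint' : Integrable (fun z : ℝ × (Fin n → ℝ) =>
        Φ ((MeasurableEquiv.piFinSuccAbove (fun _ : Fin (n+1) => ℝ) j).symm z)) := by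
      have := (hmps.integrable_comp_emb (MeasurableEquiv.measurableEmbedding _)).mpr hΦ
      exact this
    calc ∫ x, Φ x
        = ∫ z : ℝ × (Fin n → ℝ),
            Φ ((MeasurableEquiv.piFinSuccAbove (fun _ : Fin (n+1) => ℝ) j).symm z) :=
          (hmps.integral_comp (MeasurableEquiv.measurableEmbedding _) Φ).symm
      _ = ∫ y : Fin n → ℝ, ∫ t : ℝ,
            Φ ((MeasurableEquiv.piFinSuccAbove (fun _ : Fin (n+1) => ℝ) j).symm (t, y)) := by
          rw [Measure.volume_eq_prod] at hint' ⊢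
          exact integral_prod_symm _ hint'
      _ = ∫ y : Fin n → ℝ, ∫ t : ℝ, Φ (j.insertNth t y) := rfl
  -- the key integral identity, by integration by parts in coordinate j
  have keyint : ∫ x : Fin (n+1) → ℝ, (x i * A.mulVec x j * ρ x) = if i = j then Z else 0 := by
    have hFint : Integrable (fun x : Fin (n+1) → ℝ => x i * A.mulVec x j * ρ x) := by
      have heq : (fun x : Fin (n+1) → ℝ => x i * A.mulVec x j * ρ x)
          = fun x => ∑ k : Fin (n+1), A j k * (x i * x k * ρ x) := by
        funext x
        have hmv : A.mulVec x j = ∑ k : Fin (n+1), A j k * x k := by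
          simp [Matrix.mulVec, dotProduct]
        rw [hmv, Finset.mul_sum, Finset.sum_mul]
        exact Finset.sum_congr rfl fun k _ => by ring
      rw [heq]
      exact integrable_finset_sum _ fun k _ => ((hmom i k).const_mul _)
    rw [transfer _ hFint]
    have inner : ∀ y : Fin n → ℝ,
        ∫ t : ℝ, ((j.insertNth t y : Fin (n+1) → ℝ) i * A.mulVec (j.insertNth t y) j * ρ (j.insertNth t y))
          = if i = j then ∫ t : ℝ, ρ (j.insertNth t y) else 0 := by
      intro y
      set x₀ : Fin (n+1) → ℝ := j.insertNth 0 y with hx0def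
      set β : ℝ := A.mulVec x₀ j with hβdef
      set C : ℝ := Real.exp (-(1/2) * (x₀ ⬝ᵥ A.mulVec x₀) - U x₀) with hCdef
      have hxt : ∀ t : ℝ, (j.insertNth t y : Fin (n+1) → ℝ) = x₀ + t • (Pi.single j 1 : Fin (n+1) → ℝ) := by
        intro t; funext k
        rcases eq_or_ne k j with rfl | hk
        · simp [hx0def]
        · obtain ⟨k', rfl⟩ := Fin.exists_succAbove_eq hk
          simp [hx0def, Pi.single_eq_of_ne (Fin.succAbove_ne j k')]
      have hUc : ∀ t : ℝ, U (j.insertNth t y) = U x₀ := by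
        intro t
        apply hU
        intro i' hi'
        have hne : i' ≠ j := Fin.ne_of_val_ne (by omega)
        obtain ⟨k', rfl⟩ := Fin.exists_succAbove_eq hne
        simp [hx0def]
      have hcross : x₀ ⬝ᵥ A.mulVec (Pi.single j 1) = β := by
        rw [Matrix.dotProduct_mulVec, dotProduct_single, mul_one,
          ← Matrix.mulVec_transpose, hA]
      have hsingle : (Pi.single j 1 : Fin (n+1) → ℝ) ⬝ᵥ A.mulVec x₀ = β := by
        rw [single_dotProduct, one_mul]
      have hself : (Pi.single j 1 : Fin (n+1) → ℝ) ⬝ᵥ A.mulVec (Pi.single j 1) = A j j := by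
        simp [Matrix.mulVec_single, single_dotProduct]
      have hquad : ∀ t : ℝ,
          (j.insertNth t y : Fin (n+1) → ℝ) ⬝ᵥ A.mulVec (j.insertNth t y)
            = A j j * t^2 + (2*β) * t + x₀ ⬝ᵥ A.mulVec x₀ := by
        intro t
        rw [hxt t]
        simp only [Matrix.mulVec_add, Matrix.mulVec_smul, dotProduct_add, add_dotProduct,
          dotProduct_smul, smul_dotProduct, smul_eq_mul, hcross, hsingle, hself]
        ring
      have hρt : ∀ t : ℝ, ρ (j.insertNth t y)
          = C * Real.exp (-((A j j/2)*t^2 + β*t)) := by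
        intro t
        rw [hρx, hquad t, hUc t, hCdef, ← Real.exp_add]
        congr 1; ring
      have hlin : ∀ t : ℝ, A.mulVec (j.insertNth t y) j = 2*(A j j/2)*t + β := by
        intro t
        rw [hxt t]
        simp only [Matrix.mulVec_add, Matrix.mulVec_smul, Pi.add_apply, Pi.smul_apply,
          Matrix.mulVec_single, smul_eq_mul, mul_one, MulOpposite.op_one, one_smul, Matrix.col_apply]
        rw [← hβdef]
        ring
      rcases eq_or_ne i j with rfl | hij
      · rw [if_pos rfl]
        have hint1 : (fun t : ℝ => (i.insertNth t y : Fin (n+1) → ℝ) i * A.mulVec (i.insertNth t y) i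
              * ρ (i.insertNth t y))
            = fun t => C * (t * ((2*(A i i/2)*t + β)
              * Real.exp (-((A i i/2)*t^2 + β*t)))) := by
          funext t
          rw [Fin.insertNth_apply_same, hlin t, hρt t]; ring
        have hint2 : (fun t : ℝ => ρ (i.insertNth t y))
            = fun t => C * Real.exp (-((A i i/2)*t^2 + β*t)) := funext hρt
        rw [hint1, hint2, integral_const_mul, integral_const_mul,
          integral_tlin_g _ _ hα]
      · rw [if_neg hij]
        obtain ⟨k', hk'⟩ := Fin.exists_succAbove_eq hij
        have hxi : ∀ t : ℝ, (j.insertNth t y : Fin (n+1) → ℝ) i = y k' := by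
          intro t; rw [← hk', Fin.insertNth_apply_succAbove]
        have hint1 : (fun t : ℝ => (j.insertNth t y : Fin (n+1) → ℝ) i * A.mulVec (j.insertNth t y) j
              * ρ (j.insertNth t y))
            = fun t => (y k' * C) * ((2*(A j j/2)*t + β)
              * Real.exp (-((A j j/2)*t^2 + β*t))) := by
          funext t
          rw [hxi t, hlin t, hρt t]; ring
        rw [hint1, integral_const_mul, integral_lin_g _ _ hα, mul_zero]
    rcases eq_or_ne i j with rfl | hij
    · rw [if_pos rfl, hZdef, transfer _ hZint]
      refine integral_congr_ae (Filter.Eventually.of_forall fun y => ?_)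
      simpa using inner y
    · rw [if_neg hij]
      have h0 : ∀ y : Fin n → ℝ,
          ∫ t : ℝ, (fun x => x i * A.mulVec x j * ρ x) (j.insertNth t y) = 0 := by
        intro y
        simpa [hij] using inner y
      have hz : ∫ _y : Fin n → ℝ, (0:ℝ) = 0 := integral_zero _ _
      rw [← hz]
      exact integral_congr_ae (Filter.Eventually.of_forall h0)
  -- rewrite keyint in explicit form
  have keyint' : ∫ x : Fin (n+1) → ℝ,
      (x i * A.mulVec x j * Real.exp (-(1/2) * (x ⬝ᵥ A.mulVec x) - U x))
        = if i = j then Z else 0 := keyint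
  -- final assembly
  have step1 : ∑ k : Fin (n+1), G i k * A k j
      = (1/Z) * ∑ k : Fin (n+1), (∫ x : Fin (n+1) → ℝ,
          x i * x k * Real.exp (-(1/2) * (x ⬝ᵥ A.mulVec x) - U x)) * A k j := by
    rw [Finset.mul_sum]
    exact Finset.sum_congr rfl fun k _ => by rw [hGdef i k]; ring
  have step2 : ∑ k : Fin (n+1), (∫ x : Fin (n+1) → ℝ,
        x i * x k * Real.exp (-(1/2) * (x ⬝ᵥ A.mulVec x) - U x)) * A k j
      = ∫ x : Fin (n+1) → ℝ, ∑ k : Fin (n+1),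
          (x i * x k * Real.exp (-(1/2) * (x ⬝ᵥ A.mulVec x) - U x)) * A k j := by
    calc ∑ k : Fin (n+1), (∫ x : Fin (n+1) → ℝ,
          x i * x k * Real.exp (-(1/2) * (x ⬝ᵥ A.mulVec x) - U x)) * A k j
        = ∑ k : Fin (n+1), ∫ x : Fin (n+1) → ℝ,
            (x i * x k * Real.exp (-(1/2) * (x ⬝ᵥ A.mulVec x) - U x)) * A k j :=
          Finset.sum_congr rfl fun k _ => (integral_mul_const _ _).symm
      _ = _ := (integral_finset_sum _ fun k _ => ((hmom i k).mul_const _)).symm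
  have step3 : (fun x : Fin (n+1) → ℝ => ∑ k : Fin (n+1),
        (x i * x k * Real.exp (-(1/2) * (x ⬝ᵥ A.mulVec x) - U x)) * A k j)
      = fun x : Fin (n+1) → ℝ =>
          x i * A.mulVec x j * Real.exp (-(1/2) * (x ⬝ᵥ A.mulVec x) - U x) := by
    funext x
    have hmv : A.mulVec x j = ∑ k : Fin (n+1), A j k * x k := by
      simp [Matrix.mulVec, dotProduct]
    have hsymK : ∀ k, A k j = A j k := by
      intro k
      conv_lhs => rw [← hA]
      simp
    rw [hmv, Finset.mul_sum, Finset.sum_mul]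
    exact Finset.sum_congr rfl fun k _ => by rw [hsymK k]; ring
  rw [Matrix.mul_apply, step1, step2, step3, keyint']
  rcases eq_or_ne i j with rfl | hij
  · rw [if_pos rfl, if_pos rfl]
    field_simp
  · rw [if_neg hij, if_neg hij, mul_zero]
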